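/- Let X be a geodesic metric space, Y ⊆ X a subset, and x, x', z ∈ X. For a geodesic segment [x,x'] define Δ([x,x'],Y) = (1/2) sup over p,p' ∈ [x,x'], y,y' ∈ Y of max{0, d(p,p') + d(y,y') − d(p,y) − d(p',y')}. Then Δ([x,z],Y) ≤ Δ([x,x'],Y) + (x|x')_z, where (x|x')_z is the Gromov product at z. -/
import Mathlib


open ENNReal

/-- The overlap quantity Δ(Y,Z), valued in ℝ≥0∞. -/
noncomputable def overlap {X : Type*} [MetricSpace X] (Y Z : Set X) : ℝ≥0∞ :=
  ⨆ y ∈ Y, ⨆ y' ∈ Y, ⨆ z ∈ Z, ⨆ z' ∈ Z,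
    ENNReal.ofReal ((dist y y' + dist z z' - dist y z - dist y' z') / 2)

/-- `γ` parametrizes a geodesic from `x` to `x'` (by arc length on
`[0, dist x x']`). -/
def IsGeodesicFrom {X : Type*} [MetricSpace X] (γ : ℝ → X) (x x' : X) : Prop :=
  γ 0 = x ∧ γ (dist x x') = x' ∧
    ∀ s ∈ Set.Icc (0 : ℝ) (dist x x'), ∀ t ∈ Set.Icc (0 : ℝ) (dist x x'),
      dist (γ s) (γ t) = |s - t|

lemma le_overlap' {X : Type*} [MetricSpace X] {Y Z : Set X} {y y' z z' : X}
    (hy : y ∈ Y) (hy' : y' ∈ Y) (hz : z ∈ Z) (hz' : z' ∈ Z) :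
    ENNReal.ofReal ((dist y y' + dist z z' - dist y z - dist y' z') / 2) ≤ overlap Y Z := by
  unfold overlap
  exact le_iSup₂_of_le y hy (le_iSup₂_of_le y' hy'
    (le_iSup₂_of_le z hz (le_iSup₂_of_le z' hz' le_rfl)))

lemma key_ineq {X : Type*} [MetricSpace X] (x x' z : X) (γ' : ℝ → X)
    (h0' : γ' 0 = x) (hL' : γ' (dist x z) = z)
    (hgeo' : ∀ s ∈ Set.Icc (0 : ℝ) (dist x z), ∀ t ∈ Set.Icc (0 : ℝ) (dist x z),
      dist (γ' s) (γ' t) = |s - t|)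
    {u v : ℝ} (hu : u ∈ Set.Icc (0 : ℝ) (dist x z)) (hv : v ∈ Set.Icc (0 : ℝ) (dist x z))
    (huv : u ≤ v) (y y' : X) :
    (dist (γ' u) (γ' v) + dist y y' - dist (γ' u) y - dist (γ' v) y') / 2 ≤
      (dist x x' + dist y y' - dist x y - dist x' y') / 2 +
      (dist z x + dist z x' - dist x x') / 2 := by
  have h0mem : (0 : ℝ) ∈ Set.Icc (0 : ℝ) (dist x z) := ⟨le_refl 0, dist_nonneg⟩
  have hDmem : dist x z ∈ Set.Icc (0 : ℝ) (dist x z) := ⟨dist_nonneg, le_refl _⟩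
  have h1 : dist (γ' u) (γ' v) = v - u := by
    rw [hgeo' u hu v hv, abs_sub_comm, abs_of_nonneg (by linarith)]
  have h2 : dist x (γ' u) = u := by
    rw [← h0', hgeo' 0 h0mem u hu, zero_sub, abs_neg, abs_of_nonneg hu.1]
  have h3 : dist (γ' v) z = dist x z - v := by
    have h := hgeo' v hv (dist x z) hDmem
    rw [hL'] at h
    rw [h, abs_of_nonpos (by linarith [hv.2]), neg_sub]
  have t1 : dist x y ≤ dist x (γ' u) + dist (γ' u) y := dist_triangle _ _ _
  have t2 : dist z y' ≤ dist z (γ' v) + dist (γ' v) y' := dist_triangle _ _ _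
  have t3 : dist x' y' ≤ dist x' z + dist z y' := dist_triangle _ _ _
  have c1 : dist z (γ' v) = dist (γ' v) z := dist_comm _ _
  have c2 : dist x' z = dist z x' := dist_comm _ _
  have c3 : dist z x = dist x z := dist_comm _ _
  linarith

/-- Δ([x,z],Y) ≤ Δ([x,x'],Y) + (x|x')_z. -/
theorem overlap_geodesic_le {X : Type*} [MetricSpace X] (Y : Set X)
    (x x' z : X) (γ γ' : ℝ → X)
    (hγ : IsGeodesicFrom γ x x') (hγ' : IsGeodesicFrom γ' x z) :
    overlap (γ' '' Set.Icc (0 : ℝ) (dist x z)) Y ≤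
      overlap (γ '' Set.Icc (0 : ℝ) (dist x x')) Y +
        ENNReal.ofReal ((dist z x + dist z x' - dist x x') / 2) := by
  obtain ⟨h0, hL, hgeo⟩ := hγ
  obtain ⟨h0', hL', hgeo'⟩ := hγ'
  have hx : x ∈ γ '' Set.Icc (0 : ℝ) (dist x x') := ⟨0, ⟨le_refl 0, dist_nonneg⟩, h0⟩
  have hx' : x' ∈ γ '' Set.Icc (0 : ℝ) (dist x x') := ⟨dist x x', ⟨dist_nonneg, le_refl _⟩, hL⟩
  rw [overlap]
  refine iSup₂_le fun p hp => iSup₂_le fun p' hp' => iSup₂_le fun y hy =>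
    iSup₂_le fun y' hy' => ?_
  obtain ⟨s, hs, rfl⟩ := hp
  obtain ⟨t, ht, rfl⟩ := hp'
  rcases le_total s t with h | h
  · have hk := key_ineq x x' z γ' h0' hL' hgeo' hs ht h y y'
    calc ENNReal.ofReal ((dist (γ' s) (γ' t) + dist y y' - dist (γ' s) y - dist (γ' t) y') / 2)
        ≤ ENNReal.ofReal ((dist x x' + dist y y' - dist x y - dist x' y') / 2 +
            (dist z x + dist z x' - dist x x') / 2) := ENNReal.ofReal_le_ofReal hk
      _ ≤ ENNReal.ofReal ((dist x x' + dist y y' - dist x y - dist x' y') / 2) +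
            ENNReal.ofReal ((dist z x + dist z x' - dist x x') / 2) := ENNReal.ofReal_add_le
      _ ≤ _ := add_le_add (le_overlap' hx hx' hy hy') le_rfl
  · have hk := key_ineq x x' z γ' h0' hL' hgeo' ht hs h y' y
    calc ENNReal.ofReal ((dist (γ' s) (γ' t) + dist y y' - dist (γ' s) y - dist (γ' t) y') / 2)
        ≤ ENNReal.ofReal ((dist x x' + dist y' y - dist x y' - dist x' y) / 2 +
            (dist z x + dist z x' - dist x x') / 2) := by
          refine ENNReal.ofReal_le_ofReal ?_
          have c1 : dist (γ' s) (γ' t) = dist (γ' t) (γ' s) := dist_comm _ _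
          have c2 : dist y y' = dist y' y := dist_comm _ _
          linarith [hk]
      _ ≤ ENNReal.ofReal ((dist x x' + dist y' y - dist x y' - dist x' y) / 2) +
            ENNReal.ofReal ((dist z x + dist z x' - dist x x') / 2) := ENNReal.ofReal_add_le
      _ ≤ _ := add_le_add (le_overlap' hx hx' hy' hy) le_rfl
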